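/- arXiv:2001.08722 — 2 statements merged into one kernel-verified Lean document; each statement's English description precedes it below -/
import Mathlib

section
/- For all natural numbers n and m there is a bijection between (a) the set of monotone injections g : Fin (n+2) → Fin (m+2) satisfying g(0) = 0 and g(n+1) = m+1, and (b) the set of monotone surjections f : Fin (m+1) → Fin (n+1). -/
open Finset

private lemma card_filter_lt_val {k t : ℕ} (ht : t ≤ k) :
    ((univ : Finset (Fin k)).filter fun i : Fin k => (i : ℕ) < t).card = t := by
  rcases eq_or_lt_of_le ht with rfl | h
  · rw [Finset.filter_true_of_mem fun i _ => i.isLt, card_univ, Fintype.card_fin]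
  · rw [show ((univ : Finset (Fin k)).filter fun i : Fin k => (i : ℕ) < t)
        = Finset.Iio ⟨t, h⟩ by ext i; simp [Fin.lt_def], Fin.card_Iio]

private lemma card_filter_of_iff {k : ℕ} {p : Fin k → Prop} [DecidablePred p] {t : ℕ}
    (ht : t ≤ k) (h : ∀ i, p i ↔ (i : ℕ) < t) :
    ((univ : Finset (Fin k)).filter p).card = t := by
  rw [Finset.filter_congr (fun i _ => by rw [h i] : ∀ i ∈ univ, p i ↔ ((i : ℕ) < t))]
  exact card_filter_lt_val ht

private lemma mem_lower_iff {k : ℕ} {S : Finset (Fin k)}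
    (h : ∀ ⦃i j : Fin k⦄, i ≤ j → j ∈ S → i ∈ S) (i : Fin k) :
    i ∈ S ↔ (i : ℕ) < S.card := by
  constructor
  · intro hi
    have hsub : Finset.Iic i ⊆ S := fun j hj => h (Finset.mem_Iic.mp hj) hi
    have := Finset.card_le_card hsub
    rw [Fin.card_Iic] at this
    omega
  · intro hi
    by_contra hm
    have hsub : S ⊆ (univ : Finset (Fin k)).filter fun j : Fin k => (j : ℕ) < (i : ℕ) := by
      intro j hj
      simp only [mem_filter, mem_univ, true_and]
      by_contra hji
      exact hm (h (Fin.le_def.mpr (by omega)) hj)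
    have := Finset.card_le_card hsub
    rw [card_filter_lt_val i.isLt.le] at this
    omega

/-- number of `i : Fin (n+1)` with `g i.succ ≤ j` -/
private def toSurjVal {n m : ℕ} (g : Fin (n + 2) → Fin (m + 2)) (j : Fin (m + 1)) : ℕ :=
  ((univ : Finset (Fin (n + 1))).filter fun i : Fin (n + 1) => (g i.succ : ℕ) ≤ (j : ℕ)).card

/-- number of `j : Fin (m+1)` with `f j < i` -/
private def toInjVal {n m : ℕ} (f : Fin (m + 1) → Fin (n + 1)) (i : Fin (n + 2)) : ℕ :=
  ((univ : Finset (Fin (m + 1))).filter fun j : Fin (m + 1) => (f j : ℕ) < (i : ℕ)).card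

private lemma toSurj_mem_iff {n m : ℕ} {g : Fin (n + 2) → Fin (m + 2)} (hg : Monotone g)
    (j : Fin (m + 1)) (i : Fin (n + 1)) :
    (g i.succ : ℕ) ≤ (j : ℕ) ↔ (i : ℕ) < toSurjVal g j := by
  have := mem_lower_iff (S := (univ : Finset (Fin (n + 1))).filter
      fun i : Fin (n + 1) => (g i.succ : ℕ) ≤ (j : ℕ)) ?_ i
  · simpa [toSurjVal] using this
  · intro a b hab hb
    simp only [mem_filter, mem_univ, true_and] at hb ⊢
    exact le_trans (Fin.le_def.mp (hg (Fin.succ_le_succ_iff.mpr hab))) hb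

private lemma toInj_mem_iff {n m : ℕ} {f : Fin (m + 1) → Fin (n + 1)} (hf : Monotone f)
    (i : Fin (n + 2)) (j : Fin (m + 1)) :
    (f j : ℕ) < (i : ℕ) ↔ (j : ℕ) < toInjVal f i := by
  have := mem_lower_iff (S := (univ : Finset (Fin (m + 1))).filter
      fun j : Fin (m + 1) => (f j : ℕ) < (i : ℕ)) ?_ j
  · simpa [toInjVal] using this
  · intro a b hab hb
    simp only [mem_filter, mem_univ, true_and] at hb ⊢
    exact lt_of_le_of_lt (Fin.le_def.mp (hf hab)) hb

/-- central duality: `toSurjVal g j < i ↔ j < g i`. -/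
private lemma toSurj_central {n m : ℕ} {g : Fin (n + 2) → Fin (m + 2)} (hg : Monotone g)
    (hg0 : g 0 = 0) (j : Fin (m + 1)) (i : Fin (n + 2)) :
    toSurjVal g j < (i : ℕ) ↔ (j : ℕ) < (g i : ℕ) := by
  induction i using Fin.cases with
  | zero => simp [hg0]
  | succ k =>
    have h := toSurj_mem_iff hg j k
    rw [Fin.val_succ]
    omega

private lemma toSurjVal_lt {n m : ℕ} {g : Fin (n + 2) → Fin (m + 2)}
    (hgl : g (Fin.last (n + 1)) = Fin.last (m + 1)) (j : Fin (m + 1)) :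
    toSurjVal g j < n + 1 := by
  have hsub : ((univ : Finset (Fin (n + 1))).filter
      fun i : Fin (n + 1) => (g i.succ : ℕ) ≤ (j : ℕ))
      ⊆ (univ : Finset (Fin (n + 1))).erase (Fin.last n) := by
    intro i hi
    simp only [mem_filter, mem_univ, true_and] at hi
    rw [Finset.mem_erase]
    refine ⟨?_, mem_univ _⟩
    rintro rfl
    rw [Fin.succ_last, hgl, Fin.val_last] at hi
    omega
  have h := Finset.card_le_card hsub
  rw [Finset.card_erase_of_mem (mem_univ _), card_univ, Fintype.card_fin] at h
  have h2 : toSurjVal g j ≤ n + 1 - 1 := h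
  omega

private lemma toInjVal_le {n m : ℕ} (f : Fin (m + 1) → Fin (n + 1)) (i : Fin (n + 2)) :
    toInjVal f i ≤ m + 1 := by
  have := Finset.card_filter_le (univ : Finset (Fin (m + 1)))
    (fun j : Fin (m + 1) => (f j : ℕ) < (i : ℕ))
  simpa [toInjVal] using this

/-- Joyal duality: monotone injections `Fin (n+2) → Fin (m+2)` preserving both
endpoints are in bijection with monotone surjections `Fin (m+1) → Fin (n+1)`. -/
theorem stmt_6 (n m : ℕ) :
    Nonempty
      ({g : Fin (n + 2) → Fin (m + 2) //
          Monotone g ∧ Function.Injective g ∧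
          g 0 = 0 ∧ g (Fin.last (n + 1)) = Fin.last (m + 1)} ≃
        {f : Fin (m + 1) → Fin (n + 1) // Monotone f ∧ Function.Surjective f}) := by
  constructor
  refine
    { toFun := fun g =>
        ⟨fun j => ⟨toSurjVal g.1 j, toSurjVal_lt g.2.2.2.2 j⟩, ?mono, ?surj⟩
      invFun := fun f =>
        ⟨fun i => ⟨toInjVal f.1 i, Nat.lt_succ_of_le (toInjVal_le f.1 i)⟩,
          ?mono', ?inj, ?zero, ?last⟩
      left_inv := ?li
      right_inv := ?ri }
  case mono =>
    obtain ⟨g, hmono, hinj, hg0, hgl⟩ := g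
    intro j j' hj
    simp only [Fin.mk_le_mk]
    apply Finset.card_le_card
    intro i hi
    simp only [mem_filter, mem_univ, true_and] at hi ⊢
    exact le_trans hi (Fin.le_def.mp hj)
  case surj =>
    obtain ⟨g, hmono, hinj, hg0, hgl⟩ := g
    have hsm : StrictMono g := hmono.strictMono_of_injective hinj
    intro v
    have h1 : 1 ≤ (g v.succ : ℕ) := by
      have h0 := hsm (show (0 : Fin (n + 2)) < v.succ from Fin.succ_pos v)
      rw [hg0] at h0
      have := Fin.lt_def.mp h0
      exact Nat.lt_of_le_of_lt (Nat.zero_le _) this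
    have h2 : (g v.succ : ℕ) < m + 2 := (g v.succ).isLt
    refine ⟨⟨(g v.succ : ℕ) - 1, by omega⟩, ?_⟩
    apply Fin.ext
    show toSurjVal g _ = (v : ℕ)
    apply card_filter_of_iff v.isLt.le
    intro i
    show (g i.succ : ℕ) ≤ (g v.succ : ℕ) - 1 ↔ (i : ℕ) < (v : ℕ)
    have hiff : g i.succ < g v.succ ↔ i < v := by
      rw [hsm.lt_iff_lt, Fin.succ_lt_succ_iff]
    simp only [Fin.lt_def] at hiff
    omega
  case mono' =>
    obtain ⟨f, hmono, hsurj⟩ := f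
    intro i i' hi
    simp only [Fin.mk_le_mk]
    apply Finset.card_le_card
    intro j hj
    simp only [mem_filter, mem_univ, true_and] at hj ⊢
    exact lt_of_le_of_lt (le_refl _) (lt_of_lt_of_le hj (Fin.le_def.mp hi))
  case inj =>
    obtain ⟨f, hmono, hsurj⟩ := f
    have key : ∀ a b : Fin (n + 2), a < b → toInjVal f a < toInjVal f b := by
      intro a b hab
      have hvab : (a : ℕ) < (b : ℕ) := Fin.lt_def.mp hab
      have ha : (a : ℕ) < n + 1 := by have := b.isLt; omega
      obtain ⟨j, hj⟩ := hsurj ⟨(a : ℕ), ha⟩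
      have hjv : (f j : ℕ) = (a : ℕ) := by rw [hj]
      apply Finset.card_lt_card
      constructor
      · intro j' hj'
        simp only [mem_filter, mem_univ, true_and] at hj' ⊢
        omega
      · intro hsub
        have hj1 : j ∈ (univ : Finset (Fin (m + 1))).filter
            fun j'' : Fin (m + 1) => (f j'' : ℕ) < (b : ℕ) := by
          simp only [mem_filter, mem_univ, true_and]
          omega
        have := hsub hj1
        simp only [mem_filter, mem_univ, true_and] at this
        omega
    have hsm : StrictMono fun i : Fin (n + 2) =>
        (⟨toInjVal f i, Nat.lt_succ_of_le (toInjVal_le f i)⟩ : Fin (m + 2)) :=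
      fun a b hab => Fin.mk_lt_mk.mpr (key a b hab)
    exact hsm.injective
  case zero =>
    obtain ⟨f, hmono, hsurj⟩ := f
    apply Fin.ext
    show toInjVal f 0 = (0 : ℕ)
    rw [toInjVal, Finset.filter_false_of_mem, Finset.card_empty]
    intro j _
    simp
  case last =>
    obtain ⟨f, hmono, hsurj⟩ := f
    apply Fin.ext
    show toInjVal f (Fin.last (n + 1)) = m + 1
    rw [toInjVal, Finset.filter_true_of_mem, card_univ, Fintype.card_fin]
    intro j _
    simpa using (f j).isLt
  case li =>
    rintro ⟨g, hmono, hinj, hg0, hgl⟩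
    apply Subtype.ext
    funext i
    apply Fin.ext
    show toInjVal _ i = (g i : ℕ)
    apply card_filter_of_iff (Nat.lt_succ_iff.mp (g i).isLt)
    intro j
    show (toSurjVal g j : ℕ) < (i : ℕ) ↔ (j : ℕ) < (g i : ℕ)
    exact toSurj_central hmono hg0 j i
  case ri =>
    rintro ⟨f, hmono, hsurj⟩
    apply Subtype.ext
    funext j
    apply Fin.ext
    show ((univ : Finset (Fin (n + 1))).filter
        fun i : Fin (n + 1) => (toInjVal f i.succ : ℕ) ≤ (j : ℕ)).card = (f j : ℕ)
    refine card_filter_of_iff (p := fun i : Fin (n + 1) => (toInjVal f i.succ : ℕ) ≤ (j : ℕ))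
      (Nat.le_of_lt_succ (Nat.lt_succ_of_lt (f j).isLt)) fun i => ?_
    have h := toInj_mem_iff hmono i.succ j
    rw [Fin.val_succ] at h
    omega
end

section
/- Let f : Fin n → Fin p and g : Fin n' → Fin p' be monotone surjections, and let f ⊞ g : Fin (n+n') → Fin (p+p') denote their juxtaposition (ordinal sum). Suppose f ⊞ g = φ₀ ∘ φ₁ where φ₁ : Fin (n+n') → Fin k and φ₀ : Fin k → Fin (p+p') are monotone surjections. Then there exist unique k₁, k₂ with k₁ + k₂ = k and unique monotone surjections φ₁¹ : Fin n → Fin k₁, φ₁² : Fin n' → Fin k₂, φ₀¹ : Fin k₁ → Fin p, φ₀² : Fin k₂ → Fin p' such that φ₁ = φ₁¹ ⊞ φ₁² and φ₀ = φ₀¹ ⊞ φ₀². -/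
/-- The juxtaposition (ordinal sum) of `f : Fin n → Fin p` and
`g : Fin n' → Fin p'`: it acts as `f` on the first `n` elements and as `g`
(shifted by `p`) on the last `n'` elements. -/
def ordSum {n p n' p' : ℕ} (f : Fin n → Fin p) (g : Fin n' → Fin p') :
    Fin (n + n') → Fin (p + p') := fun i =>
  if h : (i : ℕ) < n then Fin.castAdd p' (f ⟨i, h⟩)
  else Fin.natAdd p (g ⟨(i : ℕ) - n, by have := i.isLt; omega⟩)

/-- Hereditary splitting for monotone surjections: any factorization of a
juxtaposition `f ⊞ g` of monotone surjections into two monotone surjections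
splits uniquely as a juxtaposition of factorizations. -/
theorem stmt_13 {n p n' p' k : ℕ}
    (f : Fin n → Fin p) (g : Fin n' → Fin p')
    (hf : Monotone f) (hfs : Function.Surjective f)
    (hg : Monotone g) (hgs : Function.Surjective g)
    (φ₁ : Fin (n + n') → Fin k) (φ₀ : Fin k → Fin (p + p'))
    (hφ₁ : Monotone φ₁) (hφ₁s : Function.Surjective φ₁)
    (hφ₀ : Monotone φ₀) (hφ₀s : Function.Surjective φ₀)
    (hfact : φ₀ ∘ φ₁ = ordSum f g) :
    ∃! s : (Σ (k₁ : ℕ) (k₂ : ℕ),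
        (Fin n → Fin k₁) × (Fin n' → Fin k₂) × (Fin k₁ → Fin p) × (Fin k₂ → Fin p')),
      ∃ hk : s.1 + s.2.1 = k,
        Monotone s.2.2.1 ∧ Function.Surjective s.2.2.1 ∧
        Monotone s.2.2.2.1 ∧ Function.Surjective s.2.2.2.1 ∧
        Monotone s.2.2.2.2.1 ∧ Function.Surjective s.2.2.2.2.1 ∧
        Monotone s.2.2.2.2.2 ∧ Function.Surjective s.2.2.2.2.2 ∧
        (∀ i, φ₁ i = Fin.cast hk (ordSum s.2.2.1 s.2.2.2.1 i)) ∧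
        (∀ j, φ₀ j = ordSum s.2.2.2.2.1 s.2.2.2.2.2 (Fin.cast hk.symm j)) := by
  classical
  have hfact' : ∀ i, φ₀ (φ₁ i) = ordSum f g i := fun i => congrFun hfact i
  obtain ⟨k₁, hk₁le, hchar⟩ : ∃ k₁, k₁ ≤ k ∧ ∀ j : Fin k, ((φ₀ j : ℕ) < p ↔ (j : ℕ) < k₁) := by
    by_cases hex : ∃ m : ℕ, ∃ hm : m < k, p ≤ (φ₀ ⟨m, hm⟩ : ℕ)
    · refine ⟨Nat.find hex, ?_, fun j => ?_⟩
      · obtain ⟨hm, -⟩ := Nat.find_spec hex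
        exact hm.le
      · constructor
        · intro hlt
          by_contra hge
          push_neg at hge
          obtain ⟨hm, hpm⟩ := Nat.find_spec hex
          have hle : (⟨Nat.find hex, hm⟩ : Fin k) ≤ j := by
            rw [Fin.le_def]; exact hge
          have hmono := hφ₀ hle
          rw [Fin.le_def] at hmono
          omega
        · intro hlt
          have h := Nat.find_min hex hlt
          push_neg at h
          simpa using h j.isLt
    · push_neg at hex
      refine ⟨k, le_rfl, fun j => ⟨fun _ => j.isLt, fun _ => ?_⟩⟩
      simpa using hex j j.isLt
  have key1 : ∀ i : Fin n, (φ₀ (φ₁ (Fin.castAdd n' i)) : ℕ) = (f i : ℕ) := by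
    intro i
    rw [hfact']
    simp [ordSum]
  have key2 : ∀ i : Fin n', (φ₀ (φ₁ (Fin.natAdd n i)) : ℕ) = p + (g i : ℕ) := by
    intro i
    rw [hfact']
    simp [ordSum]
  classical
  set k₂ := k - k₁ with hk₂def
  have hk : k₁ + k₂ = k := by omega
  have hlt1 : ∀ i : Fin n, (φ₁ (Fin.castAdd n' i) : ℕ) < k₁ := by
    intro i
    exact (hchar _).mp (by rw [key1]; exact (f i).isLt)
  have hge2 : ∀ i : Fin n', k₁ ≤ (φ₁ (Fin.natAdd n i) : ℕ) := by
    intro i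
    have h := hchar (φ₁ (Fin.natAdd n i))
    have h2 := key2 i
    rcases Nat.lt_or_ge ((φ₁ (Fin.natAdd n i)) : ℕ) k₁ with hlt | hge
    · have := h.mpr hlt; omega
    · exact hge
  have hφ₀lt : ∀ j : Fin k, (j : ℕ) < k₁ → (φ₀ j : ℕ) < p := fun j h => (hchar j).mpr h
  have hφ₀ge : ∀ j : Fin k, k₁ ≤ (j : ℕ) → p ≤ (φ₀ j : ℕ) := by
    intro j h
    rcases Nat.lt_or_ge ((φ₀ j : ℕ)) p with hlt | hge
    · have := (hchar j).mp hlt; omega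
    · exact hge
  set F1 : Fin n → Fin k₁ := fun i => ⟨(φ₁ (Fin.castAdd n' i) : ℕ), hlt1 i⟩ with hF1
  set F2 : Fin n' → Fin k₂ := fun i => ⟨(φ₁ (Fin.natAdd n i) : ℕ) - k₁, by
    have h1 := (φ₁ (Fin.natAdd n i)).isLt; have h2 := hge2 i; omega⟩ with hF2
  set G1 : Fin k₁ → Fin p := fun j => ⟨(φ₀ ⟨(j : ℕ), lt_of_lt_of_le j.isLt hk₁le⟩ : ℕ),
    hφ₀lt _ j.isLt⟩ with hG1
  set G2 : Fin k₂ → Fin p' := fun j => ⟨(φ₀ ⟨k₁ + (j : ℕ), by have := j.isLt; omega⟩ : ℕ) - p, by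
    have h1 := (φ₀ ⟨k₁ + (j : ℕ), by have := j.isLt; omega⟩).isLt
    have h2 := hφ₀ge ⟨k₁ + (j : ℕ), by have := j.isLt; omega⟩ (Nat.le_add_right _ _)
    omega⟩ with hG2
  -- key rewriting helpers
  have kφ₀ : ∀ (m : ℕ) (hm : m < k) (j : Fin k), m = (j : ℕ) → φ₀ ⟨m, hm⟩ = φ₀ j := by
    intro m hm j hmj
    exact congrArg φ₀ (Fin.ext hmj)
  have kφ₁ : ∀ (m : ℕ) (hm : m < n + n') (i : Fin (n + n')), m = (i : ℕ) →
      φ₁ ⟨m, hm⟩ = φ₁ i := by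
    intro m hm i hmi
    exact congrArg φ₁ (Fin.ext hmi)
  -- the two equations
  have hEq1 : ∀ i, φ₁ i = Fin.cast hk (ordSum F1 F2 i) := by
    intro i
    apply Fin.ext
    simp only [ordSum, Fin.coe_cast]
    by_cases h : (i : ℕ) < n
    · rw [dif_pos h]
      simp only [Fin.coe_castAdd, hF1]
      rw [show Fin.castAdd n' (⟨(i : ℕ), h⟩ : Fin n) = i from Fin.ext rfl]
    · rw [dif_neg h]
      simp only [Fin.coe_natAdd, hF2]
      have hna : Fin.natAdd n (⟨(i : ℕ) - n, by have := i.isLt; omega⟩ : Fin n') = i :=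
        Fin.ext (by simp; omega)
      have hge := hge2 (⟨(i : ℕ) - n, by have := i.isLt; omega⟩ : Fin n')
      rw [hna] at hge ⊢
      omega
  have hEq0 : ∀ j, φ₀ j = ordSum G1 G2 (Fin.cast hk.symm j) := by
    intro j
    apply Fin.ext
    simp only [ordSum]
    by_cases h : (j : ℕ) < k₁
    · rw [dif_pos (show ((Fin.cast hk.symm j : Fin (k₁ + k₂)) : ℕ) < k₁ from h)]
      simp only [Fin.coe_castAdd, hG1, Fin.coe_cast, Fin.eta]
    · rw [dif_neg (show ¬ ((Fin.cast hk.symm j : Fin (k₁ + k₂)) : ℕ) < k₁ from h)]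
      simp only [Fin.coe_natAdd, hG2, Fin.coe_cast,
        show k₁ + ((j : ℕ) - k₁) = (j : ℕ) from by omega, Fin.eta]
      have := hφ₀ge j (by omega)
      omega
  -- monotonicity
  have hF1m : Monotone F1 := by
    intro a b hab
    simp only [hF1, Fin.mk_le_mk]
    exact hφ₁ (show Fin.castAdd n' a ≤ Fin.castAdd n' b from hab)
  have hF2m : Monotone F2 := by
    intro a b hab
    simp only [hF2, Fin.mk_le_mk]
    have h := hφ₁ (show Fin.natAdd n a ≤ Fin.natAdd n b from Nat.add_le_add_left hab n)
    rw [Fin.le_def] at h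
    have := hge2 a
    omega
  have hG1m : Monotone G1 := by
    intro a b hab
    simp only [hG1, Fin.mk_le_mk]
    exact hφ₀ (show (⟨(a : ℕ), lt_of_lt_of_le a.isLt hk₁le⟩ : Fin k) ≤
      ⟨(b : ℕ), lt_of_lt_of_le b.isLt hk₁le⟩ from hab)
  have hG2m : Monotone G2 := by
    intro a b hab
    simp only [hG2, Fin.mk_le_mk]
    have hle : (⟨k₁ + (a : ℕ), by have := a.isLt; omega⟩ : Fin k) ≤
        ⟨k₁ + (b : ℕ), by have := b.isLt; omega⟩ :=
      Nat.add_le_add_left hab k₁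
    have h := hφ₀ hle
    rw [Fin.le_def] at h
    have := hφ₀ge ⟨k₁ + (a : ℕ), by have := a.isLt; omega⟩ (Nat.le_add_right _ _)
    omega
  -- surjectivity
  have hF1s : Function.Surjective F1 := by
    intro j
    obtain ⟨i, hi⟩ := hφ₁s ⟨(j : ℕ), lt_of_lt_of_le j.isLt hk₁le⟩
    have hin : (i : ℕ) < n := by
      by_contra hge
      push_neg at hge
      have hna : Fin.natAdd n (⟨(i : ℕ) - n, by have := i.isLt; omega⟩ : Fin n') = i :=
        Fin.ext (by simp; omega)
      have := hge2 (⟨(i : ℕ) - n, by have := i.isLt; omega⟩ : Fin n')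
      rw [hna, hi] at this
      simp at this
      omega
    refine ⟨⟨(i : ℕ), hin⟩, ?_⟩
    apply Fin.ext
    simp only [hF1]
    rw [show Fin.castAdd n' (⟨(i : ℕ), hin⟩ : Fin n) = i from Fin.ext rfl, hi]
  have hF2s : Function.Surjective F2 := by
    intro j
    obtain ⟨i, hi⟩ := hφ₁s ⟨k₁ + (j : ℕ), by have := j.isLt; omega⟩
    have hin : ¬ (i : ℕ) < n := by
      intro hlt
      have hca : Fin.castAdd n' (⟨(i : ℕ), hlt⟩ : Fin n) = i := Fin.ext rfl
      have := hlt1 (⟨(i : ℕ), hlt⟩ : Fin n)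
      rw [hca, hi] at this
      simp at this
    push_neg at hin
    refine ⟨⟨(i : ℕ) - n, by have := i.isLt; omega⟩, ?_⟩
    apply Fin.ext
    simp only [hF2]
    have hna : Fin.natAdd n (⟨(i : ℕ) - n, by have := i.isLt; omega⟩ : Fin n') = i :=
      Fin.ext (by simp; omega)
    rw [hna, hi]
    simp
  have hG1s : Function.Surjective G1 := by
    intro q
    obtain ⟨j, hj⟩ := hφ₀s (Fin.castAdd p' q)
    have hjk : (j : ℕ) < k₁ := by
      rw [← hchar]
      rw [hj]
      simpa using q.isLt
    refine ⟨⟨(j : ℕ), hjk⟩, ?_⟩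
    apply Fin.ext
    simp only [hG1, Fin.eta]
    rw [kφ₀ _ _ j rfl, hj]
    simp
  have hG2s : Function.Surjective G2 := by
    intro q
    obtain ⟨j, hj⟩ := hφ₀s (Fin.natAdd p q)
    have hjk : k₁ ≤ (j : ℕ) := by
      rcases Nat.lt_or_ge ((j : ℕ)) k₁ with hlt | hge
      · exfalso
        have := (hchar j).mpr hlt
        rw [hj] at this
        simp at this
      · exact hge
    refine ⟨⟨(j : ℕ) - k₁, by have := j.isLt; omega⟩, ?_⟩
    apply Fin.ext
    simp only [hG2]
    rw [kφ₀ _ _ j (by omega), hj]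
    simp
  refine ⟨⟨k₁, k₂, F1, F2, G1, G2⟩,
    ⟨hk, hF1m, hF1s, hF2m, hF2s, hG1m, hG1s, hG2m, hG2s, hEq1, hEq0⟩, ?_⟩
  rintro ⟨k₁', k₂', a, b, c, d⟩ ⟨hk', ham, has, hbm, hbs, hcm, hcs, hdm, hds, hE1, hE0⟩
  have hk'' : k₁' + k₂' = k := hk'
  have hk₁eq : k₁ = k₁' := by
    have h1 : ∀ j : Fin k, ((φ₀ j : ℕ) < p ↔ (j : ℕ) < k₁') := by
      intro j
      have hv : (φ₀ j : ℕ) = ((ordSum c d (Fin.cast hk'.symm j)) : ℕ) :=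
        congrArg Fin.val (hE0 j)
      rw [hv]
      simp only [ordSum]
      by_cases hlt : (j : ℕ) < k₁'
      · rw [dif_pos (show ((Fin.cast hk'.symm j : Fin (k₁' + k₂')) : ℕ) < k₁' from hlt)]
        simp only [Fin.coe_castAdd]
        exact ⟨fun _ => hlt, fun _ => (c _).isLt⟩
      · rw [dif_neg (show ¬ ((Fin.cast hk'.symm j : Fin (k₁' + k₂')) : ℕ) < k₁' from hlt)]
        simp only [Fin.coe_natAdd]
        omega
    by_contra hne
    rcases Nat.lt_or_ge k₁' k₁ with hl | hg
    · have h2 := (hchar ⟨k₁', by omega⟩).mpr hl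
      have h3 := (h1 ⟨k₁', by omega⟩).mp h2
      simp at h3
    · have hl : k₁ < k₁' := by omega
      have h2 := (h1 ⟨k₁, by omega⟩).mpr hl
      have h3 := (hchar ⟨k₁, by omega⟩).mp h2
      simp at h3
  subst hk₁eq
  have hk₂eq : k₂ = k₂' := by omega
  subst hk₂eq
  have hae : a = F1 := by
    funext i
    apply Fin.ext
    have hv := congrArg Fin.val (hE1 (Fin.castAdd n' i))
    simp only [Fin.coe_cast, ordSum] at hv
    rw [dif_pos (show ((Fin.castAdd n' i : Fin (n + n')) : ℕ) < n from i.isLt)] at hv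
    simp only [Fin.coe_castAdd, Fin.eta] at hv
    simp only [hF1]
    omega
  have hbe : b = F2 := by
    funext i
    apply Fin.ext
    have hv := congrArg Fin.val (hE1 (Fin.natAdd n i))
    simp only [Fin.coe_cast, ordSum] at hv
    rw [dif_neg (show ¬ ((Fin.natAdd n i : Fin (n + n')) : ℕ) < n from by simp)] at hv
    simp only [Fin.coe_natAdd, Nat.add_sub_cancel_left, Fin.eta] at hv
    simp only [hF2]
    have := hge2 i
    omega
  have hce : c = G1 := by
    funext j
    apply Fin.ext
    have hv := congrArg Fin.val (hE0 ⟨(j : ℕ), lt_of_lt_of_le j.isLt hk₁le⟩)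
    simp only [ordSum] at hv
    rw [dif_pos (show ((Fin.cast hk'.symm (⟨(j : ℕ), lt_of_lt_of_le j.isLt hk₁le⟩ : Fin k) :
      Fin (k₁ + k₂)) : ℕ) < k₁ from j.isLt)] at hv
    simp only [Fin.coe_castAdd, Fin.coe_cast, Fin.eta] at hv
    simp only [hG1]
    omega
  have hde : d = G2 := by
    funext j
    apply Fin.ext
    have hv := congrArg Fin.val (hE0 ⟨k₁ + (j : ℕ), by have := j.isLt; omega⟩)
    simp only [ordSum] at hv
    rw [dif_neg (show ¬ ((Fin.cast hk'.symm (⟨k₁ + (j : ℕ), by have := j.isLt; omega⟩ : Fin k) :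
      Fin (k₁ + k₂)) : ℕ) < k₁ from by simp)] at hv
    simp only [Fin.coe_natAdd, Fin.coe_cast, Nat.add_sub_cancel_left, Fin.eta] at hv
    simp only [hG2]
    omega
  subst hae
  subst hbe
  subst hce
  subst hde
  rfl
end
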